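/- Let S be a semigroup with identity which admits a central series. Then for every non-degenerate probability measure π on S, every bounded π-harmonic function f : S → ℂ is constant. -/

import Mathlib

open Filter Topology

/-- A central series for a semigroup `S` with identity: a finite chain
`{e} = T 0 ⊊ T 1 ⊊ ⋯ ⊊ T n = S` of subsemigroups such that each `T m` is right
reversible, and for every `1 ≤ m ≤ n`, `a ∈ T m` and `s ∈ S` there are
`x, y ∈ T (m-1)` with `x * a * s = y * s * a`. -/
def IsCentralSeries {S : Type*} [Monoid S] (n : ℕ) (T : ℕ → Subsemigroup S) : Prop :=
  ((T 0 : Set S) = {1}) ∧ (T n = ⊤) ∧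
  (∀ m, m < n → T m < T (m + 1)) ∧
  (∀ m, m ≤ n → ∀ x ∈ T m, ∀ y ∈ T m, ∃ a ∈ T m, ∃ b ∈ T m, a * x = b * y) ∧
  (∀ m, 1 ≤ m → m ≤ n → ∀ a ∈ T m, ∀ s : S,
    ∃ x ∈ T (m - 1), ∃ y ∈ T (m - 1), x * a * s = y * s * a)

section Aux

variable {S : Type*} [Monoid S] {π : S → ℝ}

private lemma summable_aux (hpos : ∀ s, 0 ≤ π s) (hsum : HasSum π 1)
    {h : S → ℝ} {C : ℝ} (hb : ∀ x, |h x| ≤ C) (x : S) :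
    Summable fun y => h (x * y) * π y := by
  apply Summable.of_norm_bounded (g := fun y => C * π y) (hsum.summable.mul_left C)
  intro y
  rw [Real.norm_eq_abs, abs_mul, abs_of_nonneg (hpos y)]
  exact mul_le_mul_of_nonneg_right (hb _) (hpos y)

/-- The key maximum-principle lemma: if `g` is a bounded harmonic function which is
a "difference along `a`" of a bounded function `h`, then `g ≤ 0`. -/
private lemma diff_nonpos (hpos : ∀ s, 0 ≤ π s) (hsum : HasSum π 1)
    (hnd : Subsemigroup.closure {s : S | 0 < π s} = ⊤)
    {g h : S → ℝ} {Cg Ch : ℝ}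
    (hgb : ∀ x, |g x| ≤ Cg) (hhb : ∀ x, |h x| ≤ Ch)
    (hg : ∀ x, g x = ∑' y, g (x * y) * π y)
    (a : S) (hd : ∀ x, g x = h (x * a) - h x) :
    ∀ x, g x ≤ 0 := by
  classical
  set M : ℝ := sSup (Set.range g) with hM
  have hbdd : BddAbove (Set.range g) := by
    refine ⟨Cg, ?_⟩
    rintro _ ⟨x, rfl⟩
    exact (abs_le.mp (hgb x)).2
  have hne : (Set.range g).Nonempty := ⟨g 1, 1, rfl⟩
  have hle : ∀ x, g x ≤ M := fun x => le_csSup hbdd ⟨x, rfl⟩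
  -- key: each z in the closure of the support has a "weight"
  have key : ∀ z : S, ∃ w : ℝ, 0 < w ∧
      ∀ ε > (0:ℝ), ∀ x, M - w * ε ≤ g x → M - ε ≤ g (x * z) := by
    intro z
    have hz : z ∈ Subsemigroup.closure {s : S | 0 < π s} := by rw [hnd]; trivial
    induction hz using Subsemigroup.closure_induction with
    | mem z hz =>
      refine ⟨π z, hz, ?_⟩
      intro ε hε x hx
      -- compare g x = ∑' y, g (x*y) * π y with a majorant
      have hφ : Summable fun y => g (x * y) * π y := summable_aux hpos hsum hgb x
      set ψ : S → ℝ := fun y => M * π y + (if y = z then (g (x * z) - M) * π z else 0)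
        with hψ
      have hψ1 : Summable fun y : S => M * π y := hsum.summable.mul_left M
      have hψ2 : Summable fun y : S =>
          (if y = z then (g (x * z) - M) * π z else 0) :=
        (hasSum_ite_eq z ((g (x * z) - M) * π z)).summable
      have hψsum : Summable ψ := hψ1.add hψ2
      have hpt : ∀ y, g (x * y) * π y ≤ ψ y := by
        intro y
        by_cases hy : y = z
        · subst hy
          have : ψ y = M * π y + (g (x * y) - M) * π y := by
            simp [ψ]
          rw [this]
          apply le_of_eq
          ring
        · simp only [ψ, if_neg hy, add_zero]
          exact mul_le_mul_of_nonneg_right (hle _) (hpos y)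
      have hψval : ∑' y, ψ y = M + (g (x * z) - M) * π z := by
        rw [hψ, hψ1.tsum_add hψ2, tsum_mul_left, hsum.tsum_eq, mul_one,
          tsum_ite_eq z (fun _ => (g (x * z) - M) * π z)]
      have hgx : g x ≤ M + (g (x * z) - M) * π z := by
        calc g x = ∑' y, g (x * y) * π y := hg x
        _ ≤ ∑' y, ψ y := hφ.tsum_le_tsum hpt hψsum
        _ = M + (g (x * z) - M) * π z := hψval
      by_contra hc
      push_neg at hc
      have hlt : (g (x * z) - M) * π z < (-ε) * π z :=
        mul_lt_mul_of_pos_right (by linarith) hz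
      nlinarith [hgx, hx, hlt]
    | mul z1 z2 hz1 hz2 ih1 ih2 =>
      obtain ⟨w1, hw1, hP1⟩ := ih1
      obtain ⟨w2, hw2, hP2⟩ := ih2
      refine ⟨w1 * w2, mul_pos hw1 hw2, ?_⟩
      intro ε hε x hx
      have h1 : M - w2 * ε ≤ g (x * z1) := by
        apply hP1 (w2 * ε) (mul_pos hw2 hε) x
        calc M - w1 * (w2 * ε) = M - w1 * w2 * ε := by ring
        _ ≤ g x := hx
      have h2 := hP2 ε hε (x * z1) h1
      rwa [mul_assoc] at h2
  -- weight uniform over powers a^j, j < N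
  have keyN : ∀ N : ℕ, ∃ w : ℝ, 0 < w ∧
      ∀ j < N, ∀ ε > (0:ℝ), ∀ x, M - w * ε ≤ g x → M - ε ≤ g (x * a ^ j) := by
    intro N
    induction N with
    | zero => exact ⟨1, one_pos, by omega⟩
    | succ N ih =>
      obtain ⟨w1, hw1, hP1⟩ := ih
      obtain ⟨w2, hw2, hP2⟩ := key (a ^ N)
      refine ⟨min w1 w2, lt_min hw1 hw2, ?_⟩
      intro j hj ε hε x hx
      have hmin1 : M - w1 * ε ≤ g x :=
        le_trans (by nlinarith [min_le_left w1 w2]) hx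
      have hmin2 : M - w2 * ε ≤ g x :=
        le_trans (by nlinarith [min_le_right w1 w2]) hx
      rcases Nat.lt_succ_iff_lt_or_eq.mp hj with hj' | rfl
      · exact hP1 j hj' ε hε x hmin1
      · exact hP2 ε hε x hmin2
  -- telescoping
  have tel : ∀ x : S, ∀ N : ℕ,
      ∑ j ∈ Finset.range N, g (x * a ^ j) = h (x * a ^ N) - h x := by
    intro x N
    induction N with
    | zero => simp
    | succ N ih =>
      rw [Finset.sum_range_succ, ih, hd (x * a ^ N)]
      have : x * a ^ N * a = x * a ^ (N + 1) := by
        rw [pow_succ, ← mul_assoc]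
      rw [this]
      ring
  -- main bound
  have hMB : ∀ N : ℕ, ∀ ε > (0:ℝ), (N : ℝ) * (M - ε) ≤ 2 * Ch := by
    intro N ε hε
    obtain ⟨w, hw, hP⟩ := keyN N
    obtain ⟨_, ⟨x, rfl⟩, hx⟩ :=
      exists_lt_of_lt_csSup hne (show M - w * ε < M by nlinarith)
    have hterm : ∀ j ∈ Finset.range N, M - ε ≤ g (x * a ^ j) := by
      intro j hj
      exact hP j (Finset.mem_range.mp hj) ε hε x hx.le
    have hsum' : (N : ℝ) * (M - ε) ≤ ∑ j ∈ Finset.range N, g (x * a ^ j) := by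
      calc (N : ℝ) * (M - ε) = ∑ _j ∈ Finset.range N, (M - ε) := by
            rw [Finset.sum_const, Finset.card_range, nsmul_eq_mul]
      _ ≤ ∑ j ∈ Finset.range N, g (x * a ^ j) := Finset.sum_le_sum hterm
    have hub : ∑ j ∈ Finset.range N, g (x * a ^ j) ≤ 2 * Ch := by
      rw [tel x N]
      have h1 := abs_le.mp (hhb (x * a ^ N))
      have h2 := abs_le.mp (hhb x)
      linarith [h1.1, h1.2, h2.1, h2.2]
    linarith
  -- conclude M ≤ 0
  have hM0 : M ≤ 0 := by
    by_contra hM0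
    push_neg at hM0
    obtain ⟨N, hN⟩ := exists_nat_gt ((2 * Ch) / (M / 2))
    have := hMB N (M / 2) (by linarith)
    have hCh : (0:ℝ) ≤ 2 * Ch := le_trans (abs_nonneg _) (by
      have := hhb 1; linarith [abs_nonneg (h 1)])
    have hdiv : (2 * Ch) / (M / 2) < (N : ℝ) := hN
    have hNM : (N : ℝ) * (M / 2) ≤ 2 * Ch := by nlinarith [this]
    rw [div_lt_iff₀ (by linarith : (0:ℝ) < M / 2)] at hdiv
    linarith
  exact fun x => le_trans (hle x) hM0

end Aux

/-- **Semigroups with a central series have the Liouville property.**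
If `S` is a semigroup with identity admitting a central series, then for every
non-degenerate probability measure `π` on `S`, every bounded `π`-harmonic function
`f : S → ℂ` is constant. -/
theorem central_series_implies_liouville
    {S : Type*} [Monoid S]
    (n : ℕ) (T : ℕ → Subsemigroup S) (hT : IsCentralSeries n T)
    (π : S → ℝ) (hpos : ∀ s, 0 ≤ π s) (hsum : HasSum π 1)
    (hnd : Subsemigroup.closure {s : S | 0 < π s} = ⊤)
    (f : S → ℂ) (hb : ∃ C : ℝ, ∀ x, ‖f x‖ ≤ C)
    (hharm : ∀ x : S, f x = ∑' y : S, f (x * y) * (π y : ℂ)) :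
    ∃ c : ℂ, ∀ x : S, f x = c := by
  obtain ⟨h0, hn, _, _, hcomm⟩ := hT
  -- main induction: bounded harmonic real functions are invariant under
  -- insertion of elements of `T m`
  have main : ∀ m, m ≤ n → ∀ (h : S → ℝ) (C : ℝ), (∀ x, |h x| ≤ C) →
      (∀ x, h x = ∑' y, h (x * y) * π y) →
      ∀ u ∈ T m, ∀ x w : S, h (x * u * w) = h (x * w) := by
    intro m
    induction m with
    | zero =>
      intro _ h C _ _ u hu x w
      have : u ∈ ((T 0 : Subsemigroup S) : Set S) := hu
      rw [h0] at this
      rw [Set.mem_singleton_iff] at this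
      subst this
      rw [mul_one]
    | succ m ih =>
      intro hmn h C hb hharm u hu x w
      have hm : m ≤ n := Nat.le_of_succ_le hmn
      have ihm := ih hm
      -- Step 1: right invariance at level m+1, for any bounded harmonic h'
      have rinv : ∀ (h' : S → ℝ) (C' : ℝ), (∀ x, |h' x| ≤ C') →
          (∀ x, h' x = ∑' y, h' (x * y) * π y) →
          ∀ a ∈ T (m + 1), ∀ x : S, h' (x * a) = h' x := by
        intro h' C' hb' hharm' a ha x
        set g : S → ℝ := fun x => h' (x * a) - h' x with hgdef
        have hswap : ∀ x y : S, h' (x * a * y) = h' (x * y * a) := by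
          intro x y
          obtain ⟨u', hu', v', hv', hcom⟩ := hcomm (m + 1) (Nat.succ_le_succ (Nat.zero_le m)) hmn a ha y
          simp only [Nat.add_sub_cancel] at hu' hv'
          have h1 := ihm h' C' hb' hharm' u' hu' x (a * y)
          have h2 := ihm h' C' hb' hharm' v' hv' x (y * a)
          calc h' (x * a * y) = h' (x * (a * y)) := by rw [mul_assoc]
          _ = h' (x * u' * (a * y)) := (h1).symm
          _ = h' (x * (u' * a * y)) := by simp only [mul_assoc]
          _ = h' (x * (v' * y * a)) := by rw [hcom]
          _ = h' (x * v' * (y * a)) := by simp only [mul_assoc]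
          _ = h' (x * (y * a)) := h2
          _ = h' (x * y * a) := by rw [mul_assoc]
        have hgb : ∀ x, |g x| ≤ 2 * C' := by
          intro x
          simp only [hgdef]
          calc |h' (x * a) - h' x| ≤ |h' (x * a)| + |h' x| := abs_sub _ _
          _ ≤ 2 * C' := by linarith [hb' (x * a), hb' x]
        have hgharm : ∀ x, g x = ∑' y, g (x * y) * π y := by
          intro x
          have e1 : h' (x * a) = ∑' y, h' (x * a * y) * π y := hharm' (x * a)
          have e2 : h' x = ∑' y, h' (x * y) * π y := hharm' x
          have s1 : Summable fun y => h' (x * a * y) * π y := by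
            have := summable_aux hpos hsum hb' (x * a)
            simpa [mul_assoc] using this
          have s2 : Summable fun y => h' (x * y) * π y :=
            summable_aux hpos hsum hb' x
          calc g x = h' (x * a) - h' x := rfl
          _ = (∑' y, h' (x * a * y) * π y) - ∑' y, h' (x * y) * π y := by
              rw [← e1, ← e2]
          _ = ∑' y, (h' (x * a * y) * π y - h' (x * y) * π y) :=
              (s1.tsum_sub s2).symm
          _ = ∑' y, g (x * y) * π y := by
              apply tsum_congr
              intro y
              simp only [hgdef]
              rw [hswap x y]
              ring
        have hng : ∀ x, (-g) x = ∑' y, (-g) (x * y) * π y := by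
          intro x
          simp only [Pi.neg_apply]
          rw [hgharm x, ← tsum_neg]
          apply tsum_congr; intro y; ring
        have hnh : ∀ x, |(-h') x| ≤ C' := by
          intro x; simpa using hb' x
        have hnharm : ∀ x, (-h') x = ∑' y, (-h') (x * y) * π y := by
          intro x
          simp only [Pi.neg_apply]
          rw [hharm' x, ← tsum_neg]
          apply tsum_congr; intro y; ring
        have hngb : ∀ x, |(-g) x| ≤ 2 * C' := by
          intro x; simpa using hgb x
        have h1 : ∀ x, g x ≤ 0 :=
          diff_nonpos hpos hsum hnd hgb hb' hgharm a (fun _ => rfl)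
        have h2 : ∀ x, (-g) x ≤ 0 := by
          apply diff_nonpos hpos hsum hnd hngb hnh hng a
          intro x
          simp only [Pi.neg_apply, hgdef]
          ring
        have := h1 x
        have := h2 x
        simp only [Pi.neg_apply, hgdef] at *
        linarith
      -- Step 2: insertion invariance at level m+1
      obtain ⟨x', hx', y', hy', hcom⟩ := hcomm (m + 1) (Nat.succ_le_succ (Nat.zero_le m)) hmn u hu w
      simp only [Nat.add_sub_cancel] at hx' hy'
      calc h (x * u * w) = h (x * (u * w)) := by rw [mul_assoc]
      _ = h (x * x' * (u * w)) := (ihm h C hb hharm x' hx' x (u * w)).symm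
      _ = h (x * (x' * u * w)) := by simp only [mul_assoc]
      _ = h (x * (y' * w * u)) := by rw [hcom]
      _ = h (x * y' * w * u) := by simp only [mul_assoc]
      _ = h (x * y' * w) := rinv h C hb hharm u hu (x * y' * w)
      _ = h (x * w) := ihm h C hb hharm y' hy' x w
  -- apply to real and imaginary parts of f
  obtain ⟨C, hC⟩ := hb
  have hsumm : ∀ x : S, Summable fun y => f (x * y) * (π y : ℂ) := by
    intro x
    apply Summable.of_norm_bounded (g := fun y => C * π y) (hsum.summable.mul_left C)
    intro y
    rw [norm_mul, Complex.norm_real, Real.norm_eq_abs, abs_of_nonneg (hpos y)]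
    exact mul_le_mul_of_nonneg_right (hC _) (hpos y)
  have hre : ∀ x, (f x).re = ∑' y, (f (x * y)).re * π y := by
    intro x
    have h1 : HasSum (fun y => f (x * y) * (π y : ℂ)) (f x) := by
      rw [hharm x]; exact (hsumm x).hasSum
    have h2 := Complex.hasSum_re h1
    have h3 : HasSum (fun y => (f (x * y)).re * π y) ((f x).re) := by
      convert h2 using 1
      funext y
      simp [Complex.mul_re]
    exact h3.tsum_eq.symm
  have him : ∀ x, (f x).im = ∑' y, (f (x * y)).im * π y := by
    intro x
    have h1 : HasSum (fun y => f (x * y) * (π y : ℂ)) (f x) := by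
      rw [hharm x]; exact (hsumm x).hasSum
    have h2 := Complex.hasSum_im h1
    have h3 : HasSum (fun y => (f (x * y)).im * π y) ((f x).im) := by
      convert h2 using 1
      funext y
      simp [Complex.mul_im]
    exact h3.tsum_eq.symm
  have hreb : ∀ x, |(f x).re| ≤ C := fun x =>
    le_trans (Complex.abs_re_le_norm (f x)) (hC x)
  have himb : ∀ x, |(f x).im| ≤ C := fun x =>
    le_trans (Complex.abs_im_le_norm (f x)) (hC x)
  refine ⟨f 1, fun x => ?_⟩
  have hxT : x ∈ T n := by rw [hn]; trivial
  have e1 := main n le_rfl (fun z => (f z).re) C hreb hre x hxT 1 1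
  have e2 := main n le_rfl (fun z => (f z).im) C himb him x hxT 1 1
  simp only [one_mul, mul_one] at e1 e2
  exact Complex.ext e1 e2
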